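/- Let m ≥ 1 be an integer and let n ≥ 1 be an integer with m ≤ 2^{n+1} − 3. Then ν_2(B(2,m,n)) ≥ −ν_2((2m+2)!), and equality ν_2(B(2,m,n)) = −ν_2((2m+2)!) holds (in particular B(2,m,n) ≠ 0) if and only if m is odd. -/

import Mathlib

/-- Generalized binomial coefficient `C_j(x) = x(x-1)⋯(x-j+1)/j!`, with `C_0(x) = 1`. -/
noncomputable def genBinom (x : ℚ) (j : ℕ) : ℚ :=
  (∏ i ∈ Finset.range j, (x - (i : ℚ))) / (Nat.factorial j : ℚ)

/-- The Ewing–Schober combinatorial formula `B(d,m,n)`: the sum is over all tuples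
`(j_1,…,j_n)` of nonnegative integers (here `j : Fin n → ℕ`, 0-indexed, so `j k`
corresponds to `j_{k+1}`) satisfying `Σ_{k=1}^n (d^{n-k+1} - 1) j_k = m + 1`, of
`Π_{k=1}^n C_{j_k}(m/d^{n-k+1} - Σ_{l=1}^{k-1} d^{k-l} j_l)`, multiplied by `-(1/m)`. -/
noncomputable def multibrotB (d m n : ℕ) : ℚ :=
  -(1 / (m : ℚ)) * ∑ᶠ j : Fin n → ℕ,
    if (∑ k : Fin n, (d ^ (n - k.val) - 1) * j k) = m + 1 then
      ∏ k : Fin n,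
        genBinom ((m : ℚ) / (d : ℚ) ^ (n - k.val)
          - ∑ l ∈ Finset.univ.filter (fun l : Fin n => l < k),
              (d : ℚ) ^ (k.val - l.val) * ((j l : ℕ) : ℚ)) (j k)
    else 0

open Finset


private def s2 (n : ℕ) : ℕ := (Nat.digits 2 n).sum

private lemma val2_factorial (n : ℕ) : padicValNat 2 n.factorial = n - s2 n := by
  have := sub_one_mul_padicValNat_factorial (p := 2) n
  simpa [s2] using this

private lemma s2_le (n : ℕ) : s2 n ≤ n := Nat.digit_sum_le 2 n

private lemma ofDigits_zero_of_sum {l : List ℕ} (h : l.sum = 0) : Nat.ofDigits 2 l = 0 := by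
  induction l with
  | nil => simp
  | cons a t ih =>
    simp only [List.sum_cons] at h
    have ha : a = 0 := by omega
    have ht : t.sum = 0 := by omega
    simp [Nat.ofDigits_cons, ha, ih ht]

private lemma s2_pos {n : ℕ} (h : 1 ≤ n) : 1 ≤ s2 n := by
  by_contra hc
  have hs : s2 n = 0 := by omega
  have := ofDigits_zero_of_sum (l := Nat.digits 2 n) hs
  rw [Nat.ofDigits_digits] at this
  omega

private lemma s2_two_mul (a : ℕ) : s2 (2 * a) = s2 a := by
  rcases Nat.eq_zero_or_pos a with rfl | ha
  · simp [s2]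
  · rw [s2, Nat.digits_def' (by norm_num) (by omega)]
    simp [Nat.mul_div_cancel_left _ (by norm_num : 0 < 2), Nat.mul_mod_right, s2]

private lemma s2_add_le (a b : ℕ) : s2 (a + b) ≤ s2 a + s2 b := by
  have h2 : (2:ℕ)^(padicValNat 2 a.factorial + padicValNat 2 b.factorial)
      ∣ (a+b).factorial := by
    rw [pow_add]
    exact dvd_trans (mul_dvd_mul pow_padicValNat_dvd pow_padicValNat_dvd)
      (Nat.factorial_mul_factorial_dvd_factorial_add a b)
  have h1 : padicValNat 2 a.factorial + padicValNat 2 b.factorial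
      ≤ padicValNat 2 (a + b).factorial :=
    (padicValNat_dvd_iff_le (Nat.factorial_ne_zero _)).mp h2
  have := val2_factorial a; have := val2_factorial b; have := val2_factorial (a + b)
  have := s2_le a; have := s2_le b; have := s2_le (a + b)
  omega

private lemma s2_pow_mul (i a : ℕ) : s2 (2 ^ i * a) = s2 a := by
  induction i with
  | zero => simp
  | succ k ih => rw [pow_succ, mul_comm (2^k) 2, mul_assoc, s2_two_mul, ih]

private lemma s2_pred_pow_mul_le (e j : ℕ) : s2 ((2 ^ e - 1) * j) ≤ e * s2 j := by
  induction e with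
  | zero => simp [s2]
  | succ k ih =>
    have h : (2 ^ (k+1) - 1) * j = 2^k * j + (2^k - 1) * j := by
      have : (1:ℕ) ≤ 2^k := Nat.one_le_two_pow
      obtain ⟨c, hc⟩ := Nat.exists_eq_add_of_le this
      rw [pow_succ, hc]
      have e1 : (1 + c) * 2 - 1 = 2 * c + 1 := by omega
      have e2 : 1 + c - 1 = c := by omega
      rw [e1, e2]; ring
    calc s2 ((2 ^ (k+1) - 1) * j) ≤ s2 (2^k * j) + s2 ((2^k-1)*j) := h ▸ s2_add_le _ _
      _ ≤ s2 j + k * s2 j := by rw [s2_pow_mul]; exact Nat.add_le_add_left ih _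
      _ = (k+1) * s2 j := by ring

private lemma val_add_left {q r : ℚ} (hq : q ≠ 0) (hr : r ≠ 0)
    (hlt : padicValRat 2 q < padicValRat 2 r) :
    q + r ≠ 0 ∧ padicValRat 2 (q + r) = padicValRat 2 q := by
  have hne : q + r ≠ 0 := by
    intro h0
    have hrq : r = -q := by linarith [eq_neg_of_add_eq_zero_left h0]
    rw [hrq, padicValRat.neg] at hlt
    exact lt_irrefl _ hlt
  refine ⟨hne, le_antisymm ?_ ?_⟩
  · have h1 : padicValRat 2 q = padicValRat 2 ((q + r) + (-r)) := by ring_nf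
    have h2 : min (padicValRat 2 (q + r)) (padicValRat 2 (-r))
        ≤ padicValRat 2 ((q + r) + (-r)) :=
      padicValRat.min_le_padicValRat_add (by rw [add_neg_cancel_right]; exact hq)
    rw [← h1, padicValRat.neg] at h2
    rcases min_cases (padicValRat 2 (q + r)) (padicValRat 2 r) with ⟨he, _⟩ | ⟨he, _⟩ <;>
      rw [he] at h2 <;> omega
  · have h2 : min (padicValRat 2 q) (padicValRat 2 r) ≤ padicValRat 2 (q + r) :=
      padicValRat.min_le_padicValRat_add hne
    rcases min_cases (padicValRat 2 q) (padicValRat 2 r) with ⟨he, _⟩ | ⟨he, _⟩ <;>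
      rw [he] at h2 <;> omega

/-- predicate: zero or valuation ≥ c -/
private def VGe (c : ℤ) (q : ℚ) : Prop := q = 0 ∨ c ≤ padicValRat 2 q

private lemma vge_add {c : ℤ} {q r : ℚ} (hq : VGe c q) (hr : VGe c r) : VGe c (q + r) := by
  rcases hq with rfl | hq
  · simpa using hr
  rcases hr with rfl | hr
  · rw [add_zero]; exact Or.inr hq
  by_cases h0 : q + r = 0
  · exact Or.inl h0
  · right
    have := padicValRat.min_le_padicValRat_add (p := 2) h0
    rcases min_cases (padicValRat 2 q) (padicValRat 2 r) with ⟨he, _⟩ | ⟨he, _⟩ <;>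
      rw [he] at this <;> omega

private lemma vge_sum {α : Type*} {s : Finset α} {f : α → ℚ} {c : ℤ}
    (h : ∀ a ∈ s, VGe c (f a)) : VGe c (∑ a ∈ s, f a) := by
  classical
  induction s using Finset.induction_on with
  | empty => exact Or.inl (by simp)
  | @insert a t hx ih =>
    rw [Finset.sum_insert hx]
    exact vge_add (h a (Finset.mem_insert_self a t))
      (ih fun b hb => h b (Finset.mem_insert_of_mem hb))

private lemma val_sum_eq {α : Type*} {s : Finset α} {f : α → ℚ} {t : α} {c : ℤ}
    (hts : t ∈ s) (hft : f t ≠ 0) (hvt : padicValRat 2 (f t) = c)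
    (h : ∀ a ∈ s, a ≠ t → VGe (c + 1) (f a)) :
    (∑ a ∈ s, f a) ≠ 0 ∧ padicValRat 2 (∑ a ∈ s, f a) = c := by
  classical
  rw [← Finset.add_sum_erase s f hts]
  have hrest : VGe (c + 1) (∑ a ∈ s.erase t, f a) :=
    vge_sum fun a ha => h a (Finset.mem_of_mem_erase ha) (Finset.ne_of_mem_erase ha)
  rcases hrest with h0 | hge
  · rw [h0, add_zero]; exact ⟨hft, hvt⟩
  · by_cases hz : (∑ a ∈ s.erase t, f a) = 0
    · rw [hz, add_zero]; exact ⟨hft, hvt⟩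
    · have := val_add_left hft hz (by omega)
      exact ⟨this.1, by rw [this.2, hvt]⟩

private lemma val_prod {α : Type*} {s : Finset α} {f : α → ℚ}
    (h : ∀ a ∈ s, f a ≠ 0) :
    (∏ a ∈ s, f a) ≠ 0 ∧
      padicValRat 2 (∏ a ∈ s, f a) = ∑ a ∈ s, padicValRat 2 (f a) := by
  classical
  induction s using Finset.induction_on with
  | empty => simp
  | @insert a t hx ih =>
    have h1 := h a (Finset.mem_insert_self a t)
    have h2 := ih fun b hb => h b (Finset.mem_insert_of_mem hb)
    rw [Finset.prod_insert hx, Finset.sum_insert hx]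
    exact ⟨mul_ne_zero h1 h2.1, by rw [padicValRat.mul h1 h2.1, h2.2]⟩


private lemma genBinom_zero (x : ℚ) : genBinom x 0 = 1 := by simp [genBinom]

private lemma descPochhammer_eval_prod (z : ℤ) (j : ℕ) :
    (descPochhammer ℤ j).eval z = ∏ i ∈ Finset.range j, (z - i) := by
  induction j with
  | zero => simp [descPochhammer]
  | succ k ih => rw [descPochhammer_succ_eval, ih, Finset.prod_range_succ]

private lemma factorial_dvd_prod (z : ℤ) (j : ℕ) :
    ((j.factorial : ℤ)) ∣ ∏ i ∈ Finset.range j, (z - i) := by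
  rw [← descPochhammer_eval_prod, Polynomial.eval_eq_smeval,
    Ring.descPochhammer_eq_factorial_smul_choose]
  exact ⟨Ring.choose z j, by rw [nsmul_eq_mul]⟩

private lemma genBinom_int (z : ℤ) (j : ℕ) : ∃ w : ℤ, genBinom (z : ℚ) j = (w : ℚ) := by
  obtain ⟨w, hw⟩ := factorial_dvd_prod z j
  refine ⟨w, ?_⟩
  have hcast : (∏ i ∈ Finset.range j, ((z:ℚ) - (i:ℚ))) =
      ((∏ i ∈ Finset.range j, (z - (i:ℤ)) : ℤ) : ℚ) := by push_cast; rfl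
  rw [genBinom, hcast, hw]
  push_cast
  have hf : (j.factorial : ℚ) ≠ 0 := by exact_mod_cast Nat.factorial_ne_zero j
  rw [mul_comm, mul_div_assoc, div_self hf, mul_one]

/-- genBinom of an integer is zero or has nonnegative valuation -/
private lemma vge_genBinom_int (z : ℤ) (j : ℕ) :
    genBinom (z : ℚ) j = 0 ∨ 0 ≤ padicValRat 2 (genBinom (z : ℚ) j) := by
  obtain ⟨w, hw⟩ := genBinom_int z j
  rcases eq_or_ne w 0 with rfl | hw0
  · left; simpa using hw
  · right
    rw [hw, padicValRat.of_int]
    exact_mod_cast Nat.zero_le _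

private lemma val_genBinom_of_factors {x : ℚ} {j : ℕ} {c : ℤ}
    (h : ∀ i : ℕ, i < j → x - i ≠ 0 ∧ padicValRat 2 (x - i) = c) :
    genBinom x j ≠ 0 ∧
      padicValRat 2 (genBinom x j) = j * c - padicValNat 2 j.factorial := by
  have hp := val_prod (s := Finset.range j) (f := fun i => x - i)
    (fun a ha => (h a (Finset.mem_range.mp ha)).1)
  have hf : (j.factorial : ℚ) ≠ 0 := by exact_mod_cast Nat.factorial_ne_zero j
  have hsum : (∑ a ∈ Finset.range j, padicValRat 2 (x - a)) = j * c := by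
    rw [Finset.sum_congr rfl (fun a ha => (h a (Finset.mem_range.mp ha)).2)]
    simp [Finset.sum_const, Finset.card_range, mul_comm]
  constructor
  · exact div_ne_zero hp.1 hf
  · rw [genBinom, padicValRat.div hp.1 hf, hp.2, hsum, padicValRat.of_nat]

private lemma val_m_div_pow_sub_nat {m : ℕ} (e t : ℕ) (hm : m ≠ 0)
    (he : padicValNat 2 m < e) :
    ((m:ℚ)/2^e - (t:ℚ)) ≠ 0 ∧
      padicValRat 2 ((m:ℚ)/2^e - (t:ℚ)) = (padicValNat 2 m : ℤ) - e := by
  have hq0 : (m:ℚ)/2^e ≠ 0 := by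
    apply div_ne_zero
    · exact_mod_cast hm
    · positivity
  have hvq : padicValRat 2 ((m:ℚ)/2^e) = (padicValNat 2 m : ℤ) - e := by
    rw [padicValRat.div (by exact_mod_cast hm) (by positivity)]
    have h2e : ((2:ℚ)^e) = (((2^e : ℕ)):ℚ) := by push_cast; ring
    rw [h2e, padicValRat.of_nat, padicValRat.of_nat, padicValNat.prime_pow]
  rcases Nat.eq_zero_or_pos t with rfl | ht
  · exact ⟨by simpa using hq0, by simpa using hvq⟩
  · have hr0 : (-(t:ℚ)) ≠ 0 := by
      simp only [neg_ne_zero, Nat.cast_ne_zero]; omega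
    have hvr : padicValRat 2 (-(t:ℚ)) = (padicValNat 2 t : ℤ) := by
      rw [padicValRat.neg, padicValRat.of_nat]
    have hlt : padicValRat 2 ((m:ℚ)/2^e) < padicValRat 2 (-(t:ℚ)) := by
      rw [hvq, hvr]; omega
    have := val_add_left hq0 hr0 hlt
    constructor
    · intro h0; exact this.1 (by rw [← h0]; ring)
    · rw [show (m:ℚ)/2^e - (t:ℚ) = (m:ℚ)/2^e + (-(t:ℚ)) by ring, this.2, hvq]

private lemma s2_zero : s2 0 = 0 := by simp [s2]

private lemma s2_finset_sum_le {ι : Type*} (s : Finset ι) (f : ι → ℕ) :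
    s2 (∑ k ∈ s, f k) ≤ ∑ k ∈ s, s2 (f k) := by
  classical
  induction s using Finset.induction_on with
  | empty => simp [s2_zero]
  | @insert a t hx ih =>
    rw [Finset.sum_insert hx, Finset.sum_insert hx]
    exact le_trans (s2_add_le _ _) (Nat.add_le_add_left ih _)

private lemma pow_bound1 (e : ℕ) : e + 1 ≤ 2 ^ e := by have := Nat.lt_two_pow_self (n := e); omega

private lemma pow_bound2 {e : ℕ} (he : 2 ≤ e) : 2 * e + 4 ≤ 2 ^ (e + 1) := by
  induction e with
  | zero => omega
  | succ k ih =>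
    rcases Nat.lt_or_ge k 2 with hk | hk
    · interval_cases k <;> simp_all
    · have := ih hk
      have h2 : (2:ℕ)^(k+1) ≤ 2^(k+2) := Nat.pow_le_pow_right (by norm_num) (by omega)
      have h3 : (2:ℕ)^(k+2) = 2 * 2^(k+1) := by ring
      omega

/-- digit sum of m+1 is at most the weighted digit sums, from the constraint -/
private lemma s2_constraint {ι : Type*} [Fintype ι] (e j : ι → ℕ) (m : ℕ)
    (hsum : ∑ k, (2 ^ (e k) - 1) * j k = m + 1) :
    s2 (m + 1) ≤ ∑ k, e k * s2 (j k) := by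
  calc s2 (m+1) = s2 (∑ k, (2 ^ (e k) - 1) * j k) := by rw [hsum]
    _ ≤ ∑ k, s2 ((2 ^ (e k) - 1) * j k) := s2_finset_sum_le _ _
    _ ≤ ∑ k, e k * s2 (j k) := Finset.sum_le_sum fun k _ => s2_pred_pow_mul_le _ _

private lemma cast_constraint {ι : Type*} [Fintype ι] (e j : ι → ℕ) (m : ℕ)
    (hsum : ∑ k, (2 ^ (e k) - 1) * j k = m + 1) :
    ∑ k, ((2:ℤ) ^ (e k) - 1) * (j k : ℤ) = (m : ℤ) + 1 := by
  have : ((∑ k, (2 ^ (e k) - 1) * j k : ℕ) : ℤ) = (m:ℤ) + 1 := by rw [hsum]; push_cast; ring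
  rw [← this, Nat.cast_sum]
  refine Finset.sum_congr rfl fun k _ => ?_
  have h1 : (1:ℕ) ≤ 2 ^ (e k) := Nat.one_le_two_pow
  push_cast [Nat.cast_sub h1]
  ring

/-- Key inequality, odd case -/
private lemma odd_key {ι : Type*} [Fintype ι] (e j : ι → ℕ) (m : ℕ)
    (he : ∀ k, 1 ≤ e k)
    (hsum : ∑ k, (2 ^ (e k) - 1) * j k = m + 1) :
    (∑ k, (((e k : ℤ) + 1) * j k - s2 (j k)))
      + s2 (m + 1) + (∑ k, if 2 ≤ e k then (j k : ℤ) else 0) ≤ 2 * (m + 1) := by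
  have key : ∀ k : ι, (((e k : ℤ) + 1) * j k - s2 (j k)) + (e k : ℤ) * s2 (j k)
      + (if 2 ≤ e k then (j k : ℤ) else 0) ≤ 2 * (((2:ℤ) ^ (e k) - 1) * (j k : ℤ)) := by
    intro k
    have hs : (s2 (j k) : ℤ) ≤ (j k : ℤ) := by exact_mod_cast s2_le (j k)
    have hs0 : (0:ℤ) ≤ s2 (j k) := Int.ofNat_nonneg _
    have hj0 : (0:ℤ) ≤ j k := Int.ofNat_nonneg _
    have he1 : (1:ℤ) ≤ e k := by exact_mod_cast he k
    by_cases h2 : 2 ≤ e k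
    · have hb : (2:ℤ) * e k + 4 ≤ 2 ^ (e k + 1) := by exact_mod_cast pow_bound2 h2
      have hb' : (2:ℤ) ^ (e k + 1) = 2 * 2 ^ (e k) := by ring
      have he2 : (2:ℤ) ≤ e k := by exact_mod_cast h2
      simp only [if_pos h2]
      nlinarith [mul_le_mul_of_nonneg_left hs (by linarith : (0:ℤ) ≤ (e k : ℤ) - 1),
        mul_nonneg (by linarith : (0:ℤ) ≤ 2 * 2^(e k) - 2*(e k) - 3) hj0]
    · have h1 : e k = 1 := by omega
      simp only [if_neg h2, h1]
      push_cast
      nlinarith [mul_le_mul_of_nonneg_left hs (by linarith : (0:ℤ) ≤ (1:ℤ) - 1)]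
  have hsumle := Finset.sum_le_sum (fun k (_ : k ∈ Finset.univ) => key k)
  rw [Finset.sum_add_distrib, Finset.sum_add_distrib, ← Finset.mul_sum,
    cast_constraint e j m hsum] at hsumle
  have hcon : (s2 (m+1) : ℤ) ≤ ∑ k, (e k : ℤ) * s2 (j k) := by
    have := s2_constraint e j m hsum
    calc (s2 (m+1) : ℤ) ≤ ((∑ k, e k * s2 (j k) : ℕ) : ℤ) := by exact_mod_cast this
      _ = ∑ k, (e k : ℤ) * s2 (j k) := by push_cast; ring
  linarith

/-- Key inequality, even case: `v = ν₂(m) ≥ 1`. -/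
private lemma even_key {ι : Type*} [Fintype ι] (e j : ι → ℕ) (m v : ℕ)
    (he : ∀ k, 1 ≤ e k) (hv : 1 ≤ v) (hvm : v + 1 ≤ m)
    (hsum : ∑ k, (2 ^ (e k) - 1) * j k = m + 1) :
    (∑ k, if v < e k then ((e k : ℤ) - v + 1) * j k - s2 (j k) else 0)
      + s2 (m + 1) + v + 1 ≤ 2 * (m + 1) := by
  classical
  set g : ι → ℤ := fun k => if v < e k then ((e k : ℤ) - v + 1) * j k - s2 (j k) else 0 with hg
  set slack : ι → ℤ := fun k => if v < e k then ((v:ℤ) + 2) * j k else ((2:ℤ)^(e k) - 1) * j k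
    with hslack
  have key : ∀ k : ι, g k + (e k : ℤ) * s2 (j k) + slack k
      ≤ 2 * (((2:ℤ) ^ (e k) - 1) * (j k : ℤ)) := by
    intro k
    have hs : (s2 (j k) : ℤ) ≤ (j k : ℤ) := by exact_mod_cast s2_le (j k)
    have hs0 : (0:ℤ) ≤ s2 (j k) := Int.ofNat_nonneg _
    have hj0 : (0:ℤ) ≤ j k := Int.ofNat_nonneg _
    have he1 : (1:ℤ) ≤ e k := by exact_mod_cast he k
    by_cases hk : v < e k
    · have h2 : 2 ≤ e k := by omega
      have hb : (2:ℤ) * e k + 4 ≤ 2 ^ (e k + 1) := by exact_mod_cast pow_bound2 h2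
      have hb' : (2:ℤ) ^ (e k + 1) = 2 * 2 ^ (e k) := by ring
      have hvk : ((v:ℤ)) + 1 ≤ e k := by exact_mod_cast hk
      simp only [hg, hslack, if_pos hk]
      nlinarith [mul_le_mul_of_nonneg_left hs (by linarith : (0:ℤ) ≤ (e k : ℤ) - 1),
        mul_nonneg (by linarith : (0:ℤ) ≤ 2 * 2^(e k) - 2*(e k) - 2) hj0]
    · have h1 : (e k : ℤ) ≤ v := by exact_mod_cast Nat.le_of_not_lt hk
      have hp1 : (e k : ℤ) + 1 ≤ 2 ^ (e k) := by exact_mod_cast pow_bound1 (e k)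
      simp only [hg, hslack, if_neg hk]
      nlinarith [mul_le_mul_of_nonneg_left hs (by linarith : (0:ℤ) ≤ (e k : ℤ)),
        mul_le_mul_of_nonneg_right (by linarith : (e k:ℤ) ≤ 2^(e k) - 1) hj0]
  have hsumle := Finset.sum_le_sum (fun k (_ : k ∈ Finset.univ) => key k)
  rw [Finset.sum_add_distrib, Finset.sum_add_distrib, ← Finset.mul_sum,
    cast_constraint e j m hsum] at hsumle
  have hcon : (s2 (m+1) : ℤ) ≤ ∑ k, (e k : ℤ) * s2 (j k) := by
    have := s2_constraint e j m hsum
    calc (s2 (m+1) : ℤ) ≤ ((∑ k, e k * s2 (j k) : ℕ) : ℤ) := by exact_mod_cast this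
      _ = ∑ k, (e k : ℤ) * s2 (j k) := by push_cast; ring
  have hslacksum : ((v:ℤ) + 1) ≤ ∑ k, slack k := by
    by_cases hex : ∃ k, v < e k ∧ 1 ≤ j k
    · obtain ⟨k₀, hk₀, hj₀⟩ := hex
      have h1 : ((v:ℤ) + 2) ≤ slack k₀ := by
        simp only [hslack, if_pos hk₀]
        have : (1:ℤ) ≤ j k₀ := by exact_mod_cast hj₀
        nlinarith
      have h2 : ∀ k ∈ Finset.univ, (0:ℤ) ≤ slack k := by
        intro k _
        simp only [hslack]
        split
        · positivity
        · have hp1 : (1:ℤ) ≤ 2 ^ (e k) := by exact_mod_cast Nat.one_le_two_pow (n := e k)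
          have hj0 : (0:ℤ) ≤ j k := Int.ofNat_nonneg _
          nlinarith
      have := Finset.single_le_sum h2 (Finset.mem_univ k₀)
      linarith
    · push_neg at hex
      have : ∀ k : ι, slack k = ((2:ℤ)^(e k) - 1) * j k := by
        intro k
        by_cases hk : v < e k
        · have : j k = 0 := by have := hex k hk; omega
          simp [hslack, hk, this]
        · simp [hslack, hk]
      rw [Finset.sum_congr rfl (fun k _ => this k), cast_constraint e j m hsum]
      have : ((v:ℤ)) + 1 ≤ (m:ℤ) := by exact_mod_cast hvm
      linarith
  linarith

/-- valuation of genBinom at `m/2^e - t` when `ν₂(m) < e` -/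
private lemma val_genBinom_m {m : ℕ} (e t jj : ℕ) (hm : m ≠ 0)
    (he : padicValNat 2 m < e) :
    genBinom ((m:ℚ)/2^e - (t:ℚ)) jj ≠ 0 ∧
      padicValRat 2 (genBinom ((m:ℚ)/2^e - (t:ℚ)) jj)
        = jj * ((padicValNat 2 m : ℤ) - e) - padicValNat 2 jj.factorial := by
  apply val_genBinom_of_factors
  intro i _
  have hx : (m:ℚ)/2^e - (t:ℚ) - (i:ℚ) = (m:ℚ)/2^e - ((t + i : ℕ):ℚ) := by push_cast; ring
  rw [hx]
  exact val_m_div_pow_sub_nat e (t+i) hm he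

/-- `m/2^e - t` is an integer when `e ≤ ν₂(m)` -/
private lemma m_div_pow_sub_nat_int {m : ℕ} (e t : ℕ) (hm : m ≠ 0)
    (he : e ≤ padicValNat 2 m) :
    ∃ z : ℤ, (m:ℚ)/2^e - (t:ℚ) = (z:ℚ) := by
  have hdvd : (2:ℕ)^e ∣ m := dvd_trans (pow_dvd_pow 2 he) pow_padicValNat_dvd
  refine ⟨((m / 2^e : ℕ) : ℤ) - (t:ℤ), ?_⟩
  have hcast : ((m / 2^e : ℕ) : ℚ) = (m:ℚ) / ((2^e : ℕ):ℚ) :=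
    Nat.cast_div hdvd (by positivity)
  have h1 : ((m:ℚ))/2^e = ((m / 2^e : ℕ) : ℚ) := by rw [hcast]; push_cast; ring
  rw [h1, Int.cast_sub, Int.cast_natCast, Int.cast_natCast]


theorem multibrotB_two_zagier (m n : ℕ) (hm : 1 ≤ m) (hn : 1 ≤ n)
    (hmn : m ≤ 2 ^ (n + 1) - 3) :
    (multibrotB 2 m n = 0 ∨
      -(padicValNat 2 (Nat.factorial (2 * m + 2)) : ℤ)
        ≤ padicValRat 2 (multibrotB 2 m n)) ∧
    ((multibrotB 2 m n ≠ 0 ∧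
      padicValRat 2 (multibrotB 2 m n)
        = -(padicValNat 2 (Nat.factorial (2 * m + 2)) : ℤ)) ↔ Odd m) := by
  classical
  have hm0 : m ≠ 0 := by omega
  have hmQ : (m:ℚ) ≠ 0 := Nat.cast_ne_zero.mpr hm0
  set v : ℕ := padicValNat 2 m with hv_def
  set N : ℕ := padicValNat 2 (Nat.factorial (2*m+2)) with hN_def
  have hNeq : (N:ℤ) = 2 * ((m:ℤ)+1) - s2 (m+1) := by
    have h1 : N = (2*m+2) - s2 (2*m+2) := val2_factorial (2*m+2)
    have h2 : s2 (2*m+2) = s2 (m+1) := by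
      rw [show 2*m+2 = 2*(m+1) by ring, s2_two_mul]
    have h3 : s2 (m+1) ≤ m+1 := s2_le _
    omega
  set S : Finset (Fin n → ℕ) :=
    (Fintype.piFinset fun _ : Fin n => Finset.range (m+2)).filter
      (fun j => ∑ k : Fin n, (2 ^ (n - k.val) - 1) * j k = m + 1) with hS_def
  set t : (Fin n → ℕ) → Fin n → ℕ := fun j k =>
    ∑ l ∈ Finset.univ.filter (fun l : Fin n => l < k), 2^(k.val - l.val) * j l with ht_def
  set T : (Fin n → ℕ) → ℚ := fun j => ∏ k : Fin n,
      genBinom ((m:ℚ)/2^(n - k.val) - ((t j k : ℕ) : ℚ)) (j k) with hT_def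
  -- rewrite multibrotB as a finite sum
  have hB : multibrotB 2 m n = -(1/(m:ℚ)) * ∑ j ∈ S, T j := by
    have hsupp : (Function.support fun j : Fin n → ℕ =>
        if ∑ k : Fin n, (2 ^ (n - k.val) - 1) * j k = m + 1 then
          ∏ k : Fin n, genBinom ((m:ℚ) / ((2:ℕ):ℚ) ^ (n - k.val)
            - ∑ l ∈ Finset.univ.filter (fun l : Fin n => l < k),
                ((2:ℕ):ℚ) ^ (k.val - l.val) * ((j l : ℕ) : ℚ)) (j k)
        else 0) ⊆ ↑S := by
      intro j hj
      have hcond : ∑ k : Fin n, (2 ^ (n - k.val) - 1) * j k = m + 1 := by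
        by_contra hc
        apply hj
        simp only [if_neg hc]
      refine Finset.mem_coe.mpr ?_
      rw [hS_def, Finset.mem_filter]
      refine ⟨Fintype.mem_piFinset.mpr (fun k => Finset.mem_range.mpr ?_), hcond⟩
      have h1 : (2^(n-k.val)-1) * j k ≤ m+1 := by
        rw [← hcond]
        exact Finset.single_le_sum (f := fun k : Fin n => (2^(n-k.val)-1)*(j k))
          (fun i _ => Nat.zero_le _) (Finset.mem_univ k)
      have h2 : 1 ≤ 2^(n-k.val)-1 := by
        have hk : k.val < n := k.isLt
        have : (2:ℕ)^1 ≤ 2^(n-k.val) := Nat.pow_le_pow_right (by norm_num) (by omega)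
        omega
      have h3 : j k ≤ (2^(n-k.val)-1) * j k := Nat.le_mul_of_pos_left _ (by omega)
      omega
    unfold multibrotB
    rw [finsum_eq_sum_of_support_subset _ hsupp]
    congr 1
    refine Finset.sum_congr rfl (fun j hj => ?_)
    have hj' : j ∈ (Fintype.piFinset fun _ : Fin n => Finset.range (m+2)).filter
        (fun j => ∑ k : Fin n, (2 ^ (n - k.val) - 1) * j k = m + 1) := by rwa [← hS_def]
    have hcnd : ∑ k : Fin n, (2 ^ (n - k.val) - 1) * j k = m + 1 :=
      (Finset.mem_filter.mp hj').2
    rw [if_pos hcnd]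
    refine Finset.prod_congr rfl (fun k _ => ?_)
    congr 1
    simp only [ht_def, Nat.cast_ofNat]
    push_cast
    ring
  -- the constraint for j ∈ S
  have hcondS : ∀ j ∈ S, ∑ k : Fin n, (2 ^ (n - k.val) - 1) * j k = m + 1 :=
    fun j hj => (Finset.mem_filter.mp hj).2
  have he1 : ∀ k : Fin n, 1 ≤ n - k.val := fun k => by have := k.isLt; omega
  have hfac : ∀ a : ℕ, (padicValNat 2 a.factorial : ℤ) = (a:ℤ) - s2 a := by
    intro a
    have h1 := val2_factorial a
    have h2 := s2_le a
    omega
  rcases Nat.even_or_odd m with heven | hodd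
  · -- EVEN CASE
    have hnotodd : ¬ Odd m := Nat.not_odd_iff_even.mpr heven
    have h2dvd : 2 ∣ m := heven.two_dvd
    have hv1 : 1 ≤ v := one_le_padicValNat_of_dvd (by omega) h2dvd
    have hvm : v + 1 ≤ m := by
      have hd : (2:ℕ)^v ∣ m := pow_padicValNat_dvd
      have h1 : 2^v ≤ m := Nat.le_of_dvd (by omega) hd
      have h2 : v < 2^v := Nat.lt_two_pow_self
      omega
    have hterm2 : ∀ j ∈ S, VGe (-(N:ℤ) + v + 1) (T j) := by
      intro j hjS
      by_cases hzero : ∃ k : Fin n,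
          genBinom ((m:ℚ)/2^(n - k.val) - ((t j k : ℕ) : ℚ)) (j k) = 0
      · obtain ⟨k, hk⟩ := hzero
        left
        rw [hT_def]
        exact Finset.prod_eq_zero (Finset.mem_univ k) hk
      · push_neg at hzero
        have hval := val_prod (s := Finset.univ)
          (f := fun k : Fin n => genBinom ((m:ℚ)/2^(n - k.val) - ((t j k : ℕ) : ℚ)) (j k))
          (fun k _ => hzero k)
        right
        rw [hT_def]
        rw [hval.2]
        have hbd : ∀ k : Fin n,
            (if v < n - k.val then ((v:ℤ) - (n-k.val:ℕ))*(j k) - ((j k:ℤ) - s2 (j k)) else 0)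
            ≤ padicValRat 2 (genBinom ((m:ℚ)/2^(n - k.val) - ((t j k : ℕ) : ℚ)) (j k)) := by
          intro k
          by_cases hvk : v < n - k.val
          · rw [if_pos hvk]
            rw [(val_genBinom_m (n-k.val) (t j k) (j k) hm0 hvk).2, hfac (j k), ← hv_def]
            apply le_of_eq
            ring
          · rw [if_neg hvk]
            obtain ⟨z, hz⟩ := m_div_pow_sub_nat_int (n-k.val) (t j k) hm0 (by omega)
            rw [hz]
            rcases vge_genBinom_int z (j k) with h0 | hge
            · exact absurd (hz ▸ h0) (hzero k)
            · exact hge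
        have hsumbd := Finset.sum_le_sum (fun k (_ : k ∈ Finset.univ) => hbd k)
        have hek := even_key (fun k : Fin n => n - k.val) j m v he1 hv1 hvm (hcondS j hjS)
        have hflip : ∑ k : Fin n,
            (if v < n - k.val then ((v:ℤ) - (n-k.val:ℕ))*(j k) - ((j k:ℤ) - s2 (j k)) else 0)
            = -(∑ k : Fin n, (if v < n - k.val
                then (((n-k.val:ℕ) : ℤ) - v + 1) * j k - s2 (j k) else 0)) := by
          rw [← Finset.sum_neg_distrib]
          refine Finset.sum_congr rfl (fun k _ => ?_)
          by_cases hvk : v < n - k.val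
          · rw [if_pos hvk, if_pos hvk]; ring
          · rw [if_neg hvk, if_neg hvk]; ring
        rw [hflip] at hsumbd
        have hs2m : (0:ℤ) ≤ s2 (m+1) := Int.ofNat_nonneg _
        linarith
    have hA2 := vge_sum hterm2
    by_cases hA0 : (∑ j ∈ S, T j) = 0
    · have hB0 : multibrotB 2 m n = 0 := by rw [hB, hA0, mul_zero]
      refine ⟨Or.inl hB0, ?_⟩
      constructor
      · rintro ⟨hne, _⟩; exact absurd hB0 hne
      · intro h; exact absurd h hnotodd
    · have hge : -(N:ℤ) + v + 1 ≤ padicValRat 2 (∑ j ∈ S, T j) := by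
        rcases hA2 with h0 | h; · exact absurd h0 hA0
        · exact h
      have hcne : -(1/(m:ℚ)) ≠ 0 := by
        simp only [ne_eq, neg_eq_zero, one_div, inv_eq_zero]
        exact hmQ
      have hcval : padicValRat 2 (-(1/(m:ℚ))) = -(v:ℤ) := by
        rw [padicValRat.neg, padicValRat.div one_ne_zero hmQ, padicValRat.one,
          padicValRat.of_nat]
        ring
      have hBne : multibrotB 2 m n ≠ 0 := by
        rw [hB]; exact mul_ne_zero hcne hA0
      have hvalB : padicValRat 2 (multibrotB 2 m n)
          = -(v:ℤ) + padicValRat 2 (∑ j ∈ S, T j) := by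
        rw [hB, padicValRat.mul hcne hA0, hcval]
      refine ⟨Or.inr ?_, ?_⟩
      · rw [hvalB]; omega
      · constructor
        · rintro ⟨_, heq⟩
          rw [hvalB] at heq
          omega
        · intro h; exact absurd h hnotodd
  · -- ODD CASE
    have hv0 : v = 0 := by
      rw [hv_def]
      apply padicValNat.eq_zero_of_not_dvd
      rw [Nat.odd_iff] at hodd
      omega
    -- exact valuation of each term
    have hterm : ∀ j ∈ S, T j ≠ 0 ∧ padicValRat 2 (T j)
        = ∑ k : Fin n, ((s2 (j k) : ℤ) - ((n - k.val : ℕ):ℤ) * j k - j k) := by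
      intro j hjS
      have hnz : ∀ k : Fin n,
          genBinom ((m:ℚ)/2^(n - k.val) - ((t j k : ℕ) : ℚ)) (j k) ≠ 0 :=
        fun k => (val_genBinom_m (n-k.val) (t j k) (j k) hm0 (by have := he1 k; omega)).1
      have hval := val_prod (s := Finset.univ)
        (f := fun k : Fin n => genBinom ((m:ℚ)/2^(n - k.val) - ((t j k : ℕ) : ℚ)) (j k))
        (fun k _ => hnz k)
      refine ⟨by rw [hT_def]; exact hval.1, ?_⟩
      rw [hT_def, hval.2]
      refine Finset.sum_congr rfl (fun k _ => ?_)
      rw [(val_genBinom_m (n-k.val) (t j k) (j k) hm0 (by have := he1 k; omega)).2,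
        hfac (j k), ← hv_def, hv0]
      push_cast
      ring
    -- the minimal tuple
    set j₀ : Fin n → ℕ := fun k => if k.val = n - 1 then m+1 else 0 with hj₀_def
    have hj₀val : ∀ k : Fin n, j₀ k = if k.val = n - 1 then m+1 else 0 := fun k => rfl
    have hk₁ : (⟨n-1, by omega⟩ : Fin n) ∈ (Finset.univ : Finset (Fin n)) := Finset.mem_univ _
    have hj₀S : j₀ ∈ S := by
      refine Finset.mem_filter.mpr ⟨?_, ?_⟩
      · refine Fintype.mem_piFinset.mpr (fun k => Finset.mem_range.mpr ?_)
        rw [hj₀val]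
        split <;> omega
      · rw [Finset.sum_eq_single_of_mem (⟨n-1, by omega⟩ : Fin n) hk₁]
        · have h1 : n - (n-1) = 1 := by omega
          simp [hj₀val, h1]
        · intro b _ hb
          have hbv : b.val ≠ n - 1 := fun h => hb (Fin.ext (by simp [h]))
          simp only [hj₀val, if_neg hbv, mul_zero]
    have hvalj₀ : (∑ k : Fin n, ((s2 (j₀ k) : ℤ) - ((n - k.val : ℕ):ℤ) * j₀ k - j₀ k))
        = -(N:ℤ) := by
      rw [Finset.sum_eq_single_of_mem (⟨n-1, by omega⟩ : Fin n) hk₁]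
      · have h1 : n - (n-1) = 1 := by omega
        simp [hj₀val, h1]
        push_cast
        omega
      · intro b _ hb
        have hbv : b.val ≠ n - 1 := fun h => hb (Fin.ext (by simp [h]))
        simp [hj₀val, if_neg hbv, s2_zero]
    -- other tuples have strictly bigger valuation
    have hother : ∀ j ∈ S, j ≠ j₀ →
        -(N:ℤ) + 1 ≤ ∑ k : Fin n, ((s2 (j k) : ℤ) - ((n - k.val : ℕ):ℤ) * j k - j k) := by
      intro j hjS hne
      have hex : ∃ k : Fin n, 2 ≤ n - k.val ∧ 1 ≤ j k := by
        by_contra hc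
        push_neg at hc
        apply hne
        have hz : ∀ k : Fin n, k.val ≠ n - 1 → j k = 0 := by
          intro k hk
          have h2 : 2 ≤ n - k.val := by have := k.isLt; omega
          have := hc k h2
          omega
        have hcond := hcondS j hjS
        rw [Finset.sum_eq_single_of_mem (⟨n-1, by omega⟩ : Fin n) hk₁ (fun b _ hb => by
          rw [hz b (fun h => hb (Fin.ext (by simp [h]))), mul_zero])] at hcond
        have h1 : n - (n-1) = 1 := by omega
        rw [h1] at hcond
        norm_num at hcond
        funext k
        rw [hj₀val k]
        by_cases hk : k.val = n - 1
        · rw [if_pos hk]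
          have : k = (⟨n-1, by omega⟩ : Fin n) := Fin.ext (by simp [hk])
          rw [this]; exact hcond
        · rw [if_neg hk]; exact hz k hk
      obtain ⟨k₂, hk2, hjk2⟩ := hex
      have hslack : (1:ℤ) ≤ ∑ k : Fin n, (if 2 ≤ n - k.val then (j k:ℤ) else 0) := by
        have h1 : (1:ℤ) ≤ (if 2 ≤ n - k₂.val then (j k₂:ℤ) else 0) := by
          rw [if_pos hk2]; exact_mod_cast hjk2
        have h2 : ∀ k ∈ Finset.univ, (0:ℤ) ≤ (if 2 ≤ n - (k:Fin n).val then (j k:ℤ) else 0) := by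
          intro k _; split
          · exact Int.ofNat_nonneg _
          · exact le_refl 0
        have := Finset.single_le_sum h2 (Finset.mem_univ k₂)
        omega
      have hok := odd_key (fun k : Fin n => n - k.val) j m he1 (hcondS j hjS)
      have hsplit : (∑ k : Fin n, ((s2 (j k) : ℤ) - ((n - k.val : ℕ):ℤ) * j k - j k))
          + (∑ k : Fin n, ((((n - k.val : ℕ):ℤ) + 1) * j k - (s2 (j k) : ℤ))) = 0 := by
        rw [← Finset.sum_add_distrib]
        apply Finset.sum_eq_zero
        intro k _
        ring
      linarith
    -- assemble the sum
    have hA := val_sum_eq (f := T) hj₀S (hterm j₀ hj₀S).1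
      ((hterm j₀ hj₀S).2.trans hvalj₀)
      (fun j hj hne => Or.inr (by
        rw [(hterm j hj).2]
        have := hother j hj hne
        omega))
    have hcne : -(1/(m:ℚ)) ≠ 0 := by
      simp only [ne_eq, neg_eq_zero, one_div, inv_eq_zero]
      exact hmQ
    have hcval : padicValRat 2 (-(1/(m:ℚ))) = 0 := by
      rw [padicValRat.neg, padicValRat.div one_ne_zero hmQ, padicValRat.one,
        padicValRat.of_nat, ← hv_def, hv0]
      ring
    have hBne : multibrotB 2 m n ≠ 0 := by
      rw [hB]; exact mul_ne_zero hcne hA.1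
    have hvalB : padicValRat 2 (multibrotB 2 m n) = -(N:ℤ) := by
      rw [hB, padicValRat.mul hcne hA.1, hcval, hA.2, zero_add]
    exact ⟨Or.inr (le_of_eq hvalB.symm), ⟨fun _ => hodd, fun _ => ⟨hBne, hvalB⟩⟩⟩
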